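/- Equidistributed ensembles contain many distinct high-complexity unitaries: Let 𝒢 be a gate set in U(d), let ν be a probability measure on U(d) that is (α,β)-equidistributed at scale ε with 2·β·ε ≤ 2, and assume the natural number r satisfies r + 2 < (d²−1)·log(A/ε)/log|𝒢| where A := c_o/(4β(c^o)²). Let N_pack(Y, ε) denote the supremum of cardinalities of finite subsets of Y whose elements are pairwise at D-distance ≥ ε, and let 𝒞^{>r}_ε(ν) := {U ∈ supp(ν) : no W ∈ 𝒢^{≤r} has D(U,W) ≤ ε} (the support points of complexity larger than r). Then 2·N_pack(𝒞^{>r}_ε(ν), ε) ≥ N_pack(supp(ν), ε), and N_pack(supp(ν), ε) ≥ 1/Vol(2βε). -/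

import Mathlib

open MeasureTheory
set_option maxHeartbeats 2000000
set_option synthInstance.maxHeartbeats 400000
open scoped ENNReal Matrix InnerProductSpace

namespace Paper

noncomputable section

instance matMS (d : ℕ) : MeasurableSpace (Matrix (Fin d) (Fin d) ℂ) := borel _
instance matBS (d : ℕ) : BorelSpace (Matrix (Fin d) (Fin d) ℂ) := ⟨rfl⟩

/-- The unitary group `U(d)`. -/
abbrev UG (d : ℕ) := Matrix.unitaryGroup (Fin d) ℂ

/-- ℓ²→ℓ² operator norm (spectral norm) of a matrix. -/
def opNorm {d : ℕ} (A : Matrix (Fin d) (Fin d) ℂ) : ℝ :=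
  ‖Matrix.toEuclideanCLM (𝕜 := ℂ) A‖

/-- Phase-invariant distance on unitary channels. -/
def D {d : ℕ} (U V : UG d) : ℝ :=
  ⨅ z : {z : ℂ // ‖z‖ = 1},
    opNorm ((U : Matrix (Fin d) (Fin d) ℂ) - z.val • (V : Matrix (Fin d) (Fin d) ℂ))

/-- Closed ball of radius `r` around `V` in `U(d)` for the distance `D`. -/
def ball {d : ℕ} (V : UG d) (r : ℝ) : Set (UG d) := {U | D U V ≤ r}

/-- Haar volume of a ball of radius `r`. -/
def Vol {d : ℕ} (μ : Measure (UG d)) (r : ℝ) : ℝ≥0∞ := μ (ball 1 r)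

/-- `(α,β)`-equidistribution of `ν` at scale `ε` (relative to the Haar measure `μ`). -/
def Equidistributed {d : ℕ} (μ ν : Measure (UG d)) (α β ε : ℝ) : Prop :=
  ∀ (V : UG d) (r : ℝ), ε ≤ r →
    Vol μ (α * r) ≤ ν (ball V r) ∧ ν (ball V r) ≤ Vol μ (β * r)

/-- Products of at most `r` elements of the gate set `𝒢`. -/
def wordsLe {d : ℕ} (𝒢 : Finset (UG d)) (r : ℕ) : Set (UG d) :=
  {W | ∃ l : List (UG d), l.length ≤ r ∧ (∀ g ∈ l, g ∈ 𝒢) ∧ l.prod = W}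

/-- Convolution of two measures on a monoid: pushforward of the product measure under
multiplication. -/
def mconv {G : Type*} [Monoid G] [MeasurableSpace G] (ν ϑ : Measure G) : Measure G :=
  (ν.prod ϑ).map (fun p => p.1 * p.2)

/-- `t`-fold convolution power of a measure. -/
def convPow {G : Type*} [Monoid G] [MeasurableSpace G] (ν : Measure G) : ℕ → Measure G
  | 0 => Measure.dirac 1
  | n + 1 => mconv (convPow ν n) ν

/-- The random walk `U_t = V_t ⋯ V_1`. -/
def walk {d : ℕ} {Ω : Type*} (V : ℕ → Ω → UG d) (t : ℕ) (ω : Ω) : UG d :=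
  ((List.range t).map (fun i => V (t - i) ω)).prod

/-- Euclidean space `ℂ^d`. -/
abbrev EV (d : ℕ) := EuclideanSpace ℂ (Fin d)

instance evMS (d : ℕ) : MeasurableSpace (EV d) := borel _
instance evBS (d : ℕ) : BorelSpace (EV d) := ⟨rfl⟩

/-- Distance on pure states. -/
def dS {d : ℕ} (ψ φ : EV d) : ℝ := Real.sqrt (1 - ‖⟪ψ, φ⟫_ℂ‖ ^ 2)

/-- Ball of radius `r` around the state `φ`, inside the set of unit vectors. -/
def ballS {d : ℕ} (φ : EV d) (r : ℝ) : Set (EV d) := {ψ | ‖ψ‖ = 1 ∧ dS ψ φ ≤ r}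

/-- Action of a unitary matrix on a vector. -/
def act {d : ℕ} (U : UG d) (ψ : EV d) : EV d :=
  Matrix.toEuclideanLin (U : Matrix (Fin d) (Fin d) ℂ) ψ

/-- Topological support of a measure. -/
def msupport {X : Type*} [TopologicalSpace X] [MeasurableSpace X] (ν : Measure X) : Set X :=
  {x | ∀ U : Set X, IsOpen U → x ∈ U → ν U ≠ 0}

/-- Packing number (as an extended nonnegative real): supremum of cardinalities of finite
subsets of `Y` whose elements are pairwise at `dist`-distance at least `ε`. -/
def Npack {X : Type*} (dist : X → X → ℝ) (Y : Set X) (ε : ℝ) : ℝ≥0∞ :=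
  ⨆ (S : Finset X) (_ : ↑S ⊆ Y ∧ (S : Set X).Pairwise fun x y => ε ≤ dist x y),
    (S.card : ℝ≥0∞)

end
end Paper

namespace Paper
open ProbabilityTheory

noncomputable section
set_option maxHeartbeats 1000000
open Filter
abbrev Mat (d : ℕ) := Matrix (Fin d) (Fin d) ℂ
variable {d : ℕ}

-- basic opNorm facts
lemma opNorm_nonneg (A : Matrix (Fin d) (Fin d) ℂ) : 0 ≤ opNorm A := norm_nonneg _

lemma opNorm_add_le (A B : Matrix (Fin d) (Fin d) ℂ) : opNorm (A + B) ≤ opNorm A + opNorm B := by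
  unfold opNorm; rw [map_add]; exact norm_add_le _ _

lemma opNorm_smul (c : ℂ) (A : Matrix (Fin d) (Fin d) ℂ) : opNorm (c • A) = ‖c‖ * opNorm A := by
  unfold opNorm; rw [_root_.map_smul]; exact norm_smul c (Matrix.toEuclideanCLM (𝕜 := ℂ) A)

lemma opNorm_neg (A : Matrix (Fin d) (Fin d) ℂ) : opNorm (-A) = opNorm A := by
  unfold opNorm; rw [map_neg, norm_neg]

-- unitary isometry
lemma norm_clm_apply_unitary (g : UG d) (v : EuclideanSpace ℂ (Fin d)) :
    ‖Matrix.toEuclideanCLM (𝕜 := ℂ) (g : Matrix (Fin d) (Fin d) ℂ) v‖ = ‖v‖ := by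
  set T := Matrix.toEuclideanCLM (𝕜 := ℂ) (g : Matrix (Fin d) (Fin d) ℂ) with hT
  have hst : star (g : Matrix (Fin d) (Fin d) ℂ) * g = 1 := g.2.1
  have h1 : (ContinuousLinearMap.adjoint T).comp T = ContinuousLinearMap.id ℂ _ := by
    rw [← ContinuousLinearMap.star_eq_adjoint]
    have : star T = Matrix.toEuclideanCLM (𝕜 := ℂ) (star (g : Matrix (Fin d) (Fin d) ℂ)) := by
      rw [hT, ← map_star]
    rw [this]
    ext v
    simp only [ContinuousLinearMap.comp_apply, ContinuousLinearMap.id_apply]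
    rw [hT, ← ContinuousLinearMap.mul_apply, ← map_mul, hst, map_one]
    rfl
  have h2 : (⟪T v, T v⟫_ℂ) = ⟪v, v⟫_ℂ := by
    calc ⟪T v, T v⟫_ℂ = ⟪(ContinuousLinearMap.adjoint T) (T v), v⟫_ℂ := by
          rw [ContinuousLinearMap.adjoint_inner_left]
      _ = ⟪v, v⟫_ℂ := by
          rw [← ContinuousLinearMap.comp_apply, h1]; rfl
  have h3 : ((‖T v‖ : ℂ)) ^ 2 = ((‖v‖ : ℂ)) ^ 2 := by
    rw [inner_self_eq_norm_sq_to_K (𝕜 := ℂ), inner_self_eq_norm_sq_to_K (𝕜 := ℂ)] at h2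
    exact h2
  have h4 : ‖T v‖ ^ 2 = ‖v‖ ^ 2 := by exact_mod_cast h3
  nlinarith [norm_nonneg (T v), norm_nonneg v, h4]

lemma opNorm_unitary_mul (g : UG d) (M : Matrix (Fin d) (Fin d) ℂ) :
    opNorm ((g : Matrix (Fin d) (Fin d) ℂ) * M) = opNorm M := by
  unfold opNorm
  rw [map_mul]
  set Tg := Matrix.toEuclideanCLM (𝕜 := ℂ) (g : Matrix (Fin d) (Fin d) ℂ)
  set TM := Matrix.toEuclideanCLM (𝕜 := ℂ) M
  apply le_antisymm
  · apply ContinuousLinearMap.opNorm_le_bound _ (norm_nonneg TM)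
    intro v
    rw [ContinuousLinearMap.mul_apply, norm_clm_apply_unitary]
    exact TM.le_opNorm v
  · apply ContinuousLinearMap.opNorm_le_bound _ (norm_nonneg _)
    intro v
    have : ‖TM v‖ = ‖(Tg * TM) v‖ := by
      rw [ContinuousLinearMap.mul_apply, norm_clm_apply_unitary]
    rw [this]
    exact (Tg * TM).le_opNorm v

variable {d : ℕ}

instance sphereNonempty : Nonempty {z : ℂ // ‖z‖ = 1} := ⟨⟨1, norm_one⟩⟩

lemma conj_mul_self {z : ℂ} (hz : ‖z‖ = 1) : (starRingEnd ℂ) z * z = 1 := by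
  rw [mul_comm, Complex.mul_conj]
  have : Complex.normSq z = 1 := by
    rw [Complex.normSq_eq_norm_sq, hz, one_pow]
  rw [this]; norm_num

lemma D_bdd (U V : UG d) : BddBelow (Set.range fun z : {z : ℂ // ‖z‖ = 1} =>
    opNorm ((U : Mat d) - z.val • (V : Mat d))) := by
  refine ⟨0, ?_⟩; rintro x ⟨z, rfl⟩; exact opNorm_nonneg _

lemma D_le_opNorm (U V : UG d) (z : {z : ℂ // ‖z‖ = 1}) :
    D U V ≤ opNorm ((U : Mat d) - z.val • (V : Mat d)) :=
  ciInf_le (D_bdd U V) z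

lemma le_D (U V : UG d) (a : ℝ)
    (h : ∀ z : {z : ℂ // ‖z‖ = 1}, a ≤ opNorm ((U : Mat d) - z.val • (V : Mat d))) :
    a ≤ D U V := le_ciInf h

lemma D_nonneg (U V : UG d) : 0 ≤ D U V := le_D _ _ _ fun _ => opNorm_nonneg _

lemma opNorm_zero : opNorm (0 : Mat d) = 0 := by
  unfold opNorm; rw [map_zero, norm_zero]

lemma D_self (U : UG d) : D U U = 0 := by
  refine le_antisymm ?_ (D_nonneg U U)
  have := D_le_opNorm U U ⟨1, norm_one⟩
  simpa [one_smul, sub_self, opNorm_zero] using this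

lemma D_symm_le (U V : UG d) : D U V ≤ D V U := by
  apply le_D
  intro z
  have hz : ‖(starRingEnd ℂ) z.val‖ = 1 := by rw [RCLike.norm_conj]; exact z.2
  calc D U V ≤ opNorm ((U : Mat d) - ((starRingEnd ℂ) z.val) • (V : Mat d)) :=
        D_le_opNorm U V ⟨(starRingEnd ℂ) z.val, hz⟩
    _ = opNorm ((V : Mat d) - z.val • (U : Mat d)) := by
        have h : (U : Mat d) - ((starRingEnd ℂ) z.val) • (V : Mat d) =
            (-((starRingEnd ℂ) z.val)) • ((V : Mat d) - z.val • (U : Mat d)) := by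
          rw [neg_smul, smul_sub, smul_smul, conj_mul_self z.2, one_smul, neg_sub]
        rw [h, opNorm_smul, norm_neg, hz, one_mul]

lemma D_symm (U V : UG d) : D U V = D V U := le_antisymm (D_symm_le U V) (D_symm_le V U)

lemma opNorm_sub_le (A B C : Mat d) :
    opNorm (A - C) ≤ opNorm (A - B) + opNorm (B - C) := by
  have h : A - C = (A - B) + (B - C) := by abel
  rw [h]; exact opNorm_add_le _ _

lemma D_triangle (U V W : UG d) : D U W ≤ D U V + D V W := by
  have key : ∀ z w : {z : ℂ // ‖z‖ = 1},
      D U W ≤ opNorm ((U : Mat d) - z.val • (V : Mat d))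
        + opNorm ((V : Mat d) - w.val • (W : Mat d)) := by
    intro z w
    have hzw : ‖z.val * w.val‖ = 1 := by rw [norm_mul, z.2, w.2, one_mul]
    calc D U W ≤ opNorm ((U : Mat d) - (z.val * w.val) • (W : Mat d)) :=
          D_le_opNorm U W ⟨z.val * w.val, hzw⟩
      _ ≤ opNorm ((U : Mat d) - z.val • (V : Mat d))
          + opNorm (z.val • (V : Mat d) - (z.val * w.val) • (W : Mat d)) :=
          opNorm_sub_le _ _ _
      _ = opNorm ((U : Mat d) - z.val • (V : Mat d))
          + opNorm ((V : Mat d) - w.val • (W : Mat d)) := by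
          have h : z.val • (V : Mat d) - (z.val * w.val) • (W : Mat d)
              = z.val • ((V : Mat d) - w.val • (W : Mat d)) := by
            rw [smul_sub, smul_smul]
          rw [h, opNorm_smul, z.2, one_mul]
  have step : ∀ z : {z : ℂ // ‖z‖ = 1},
      D U W - opNorm ((U : Mat d) - z.val • (V : Mat d)) ≤ D V W := by
    intro z
    apply le_D
    intro w
    linarith [key z w]
  have h2 : D U W - D V W ≤ D U V := by
    apply le_D
    intro z
    linarith [step z]
  linarith

lemma D_le_opNorm_add (U U' V : UG d) :
    D U V ≤ opNorm ((U : Mat d) - (U' : Mat d)) + D U' V := by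
  have step : ∀ z : {z : ℂ // ‖z‖ = 1},
      D U V - opNorm ((U : Mat d) - (U' : Mat d)) ≤
        opNorm ((U' : Mat d) - z.val • (V : Mat d)) := by
    intro z
    have h1 := D_le_opNorm U V z
    have h2 := opNorm_sub_le (U : Mat d) (U' : Mat d) (z.val • (V : Mat d))
    linarith
  have := le_D U' V _ step
  linarith

lemma D_mul_left (g U V : UG d) : D (g * U) (g * V) = D U V := by
  unfold D
  congr 1
  funext z
  have h1 : ((g * U : UG d) : Mat d) = (g : Mat d) * (U : Mat d) := rfl
  have h2 : ((g * V : UG d) : Mat d) = (g : Mat d) * (V : Mat d) := rfl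
  rw [h1, h2]
  have h : (g : Mat d) * (U : Mat d) - z.val • ((g : Mat d) * (V : Mat d))
      = (g : Mat d) * ((U : Mat d) - z.val • (V : Mat d)) := by
    rw [Matrix.mul_sub, Matrix.mul_smul]
  rw [h, opNorm_unitary_mul]

open Filter
-- continuity of the norm functional on matrices
lemma continuous_opNorm : Continuous fun M : Mat d => opNorm M := by
  unfold opNorm
  exact (LinearMap.continuous_of_finiteDimensional
    ({ toFun := fun M => Matrix.toEuclideanCLM (𝕜 := ℂ) M,
       map_add' := fun a b => map_add _ a b,
       map_smul' := fun c a => by simp [_root_.map_smul] } :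
      Mat d →ₗ[ℂ] (EuclideanSpace ℂ (Fin d) →L[ℂ] EuclideanSpace ℂ (Fin d)))).norm

instance ugBorel : BorelSpace (UG d) := Subtype.borelSpace _

instance matSecondCountable : SecondCountableTopology (Mat d) :=
  inferInstanceAs (SecondCountableTopology ((Fin d) → (Fin d) → ℂ))

instance ugSecondCountable : SecondCountableTopology (UG d) :=
  TopologicalSpace.Subtype.secondCountableTopology _

lemma continuous_D_right (V : UG d) : Continuous fun U : UG d => D U V := by
  rw [continuous_iff_continuousAt]
  intro U₀
  have hφ : Continuous fun U : UG d => opNorm ((U : Mat d) - (U₀ : Mat d)) := by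
    apply continuous_opNorm.comp
    exact (continuous_subtype_val.sub continuous_const)
  have hφ0 : Tendsto (fun U : UG d => opNorm ((U : Mat d) - (U₀ : Mat d))) (nhds U₀) (nhds 0) := by
    have := hφ.tendsto U₀
    simpa [sub_self, opNorm_zero] using this
  have habs : ∀ U : UG d, ‖D U V - D U₀ V‖ ≤ opNorm ((U : Mat d) - (U₀ : Mat d)) := by
    intro U
    rw [Real.norm_eq_abs, abs_le]
    constructor
    · have := D_le_opNorm_add U₀ U V
      have hsym : opNorm ((U₀ : Mat d) - (U : Mat d)) = opNorm ((U : Mat d) - (U₀ : Mat d)) := by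
        rw [← opNorm_neg ((U₀ : Mat d) - (U : Mat d)), neg_sub]
      linarith [this, hsym.le]
    · linarith [D_le_opNorm_add U U₀ V]
  have h0 : Tendsto (fun U : UG d => D U V - D U₀ V) (nhds U₀) (nhds 0) :=
    squeeze_zero_norm habs hφ0
  have := h0.add_const (D U₀ V)
  exact (by simpa using this : Tendsto (fun x => D x V) (nhds U₀) (nhds (D U₀ V)))

lemma isClosed_ball (V : UG d) (r : ℝ) : IsClosed (ball V r) :=
  isClosed_Iic.preimage (continuous_D_right V)

lemma measurableSet_ball (V : UG d) (r : ℝ) : MeasurableSet (ball V r) :=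
  (isClosed_ball V r).measurableSet

lemma continuous_mul_left_UG (g : UG d) : Continuous fun U : UG d => g * U := by
  apply Continuous.subtype_mk
  show Continuous fun U : UG d => (g : Mat d) * (U : Mat d)
  exact Continuous.matrix_mul continuous_const continuous_subtype_val

lemma ball_preimage (V : UG d) (r : ℝ) :
    ball V r = (fun U : UG d => V⁻¹ * U) ⁻¹' (ball 1 r) := by
  ext U
  simp only [ball, Set.mem_setOf_eq, Set.mem_preimage]
  have key : D U V = D (V⁻¹ * U) 1 := by
    have := D_mul_left V⁻¹ U V
    simp only [inv_mul_cancel] at this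
    exact this.symm
  rw [key]

lemma vol_ball (μ : Measure (UG d)) [μ.IsMulLeftInvariant] (V : UG d) (r : ℝ) :
    μ (ball V r) = Vol μ r := by
  rw [ball_preimage]
  have hm : Measurable fun U : UG d => V⁻¹ * U := (continuous_mul_left_UG V⁻¹).measurable
  rw [← Measure.map_apply hm (measurableSet_ball 1 r)]
  rw [Measure.IsMulLeftInvariant.map_mul_left_eq_self V⁻¹]
  rfl

-- support has full measure
lemma msupport_compl_null {X : Type*} [TopologicalSpace X] [MeasurableSpace X]
    [SecondCountableTopology X] (ν : Measure X) :
    ν (msupport ν)ᶜ = 0 := by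
  obtain ⟨b, hbc, -, hb⟩ := TopologicalSpace.exists_countable_basis X
  have hsub : (msupport ν)ᶜ ⊆ ⋃₀ {u ∈ b | ν u = 0} := by
    intro x hx
    simp only [Set.mem_compl_iff, msupport, Set.mem_setOf_eq, not_forall] at hx
    obtain ⟨U, hUopen, hxU, hU0⟩ := hx
    rw [not_not] at hU0
    obtain ⟨v, hvb, hxv, hvU⟩ := hb.exists_subset_of_mem_open hxU hUopen
    exact ⟨v, ⟨hvb, le_antisymm (hU0 ▸ measure_mono hvU) zero_le⟩, hxv⟩
  refine measure_mono_null hsub ?_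
  rw [measure_sUnion_null_iff (hbc.mono (Set.sep_subset _ _))]
  exact fun s hs => hs.2

lemma one_le_measure_msupport {X : Type*} [TopologicalSpace X] [MeasurableSpace X]
    [SecondCountableTopology X] (ν : Measure X) [IsProbabilityMeasure ν] :
    (1 : ℝ≥0∞) ≤ ν (msupport ν) := by
  calc (1 : ℝ≥0∞) = ν Set.univ := (measure_univ).symm
    _ = ν ((msupport ν) ∪ (msupport ν)ᶜ) := by rw [Set.union_compl_self]
    _ ≤ ν (msupport ν) + ν (msupport ν)ᶜ := measure_union_le _ _
    _ = ν (msupport ν) := by rw [msupport_compl_null, add_zero]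

-- finite word sets
open Classical in
noncomputable def wordsExact (𝒢 : Finset (UG d)) : ℕ → Finset (UG d)
  | 0 => {1}
  | (k+1) => 𝒢.biUnion fun a => (wordsExact 𝒢 k).image (a * ·)

open Classical in
noncomputable def wordFinset (𝒢 : Finset (UG d)) (r : ℕ) : Finset (UG d) :=
  (Finset.range (r+1)).biUnion (wordsExact 𝒢)

lemma card_wordsExact (𝒢 : Finset (UG d)) (k : ℕ) :
    (wordsExact 𝒢 k).card ≤ 𝒢.card ^ k := by
  classical
  induction k with
  | zero => simp [wordsExact]
  | succ k ih =>
    calc (wordsExact 𝒢 (k+1)).card ≤ ∑ a ∈ 𝒢, ((wordsExact 𝒢 k).image (a * ·)).card :=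
          Finset.card_biUnion_le
      _ ≤ ∑ _a ∈ 𝒢, 𝒢.card ^ k := Finset.sum_le_sum fun a _ =>
          le_trans Finset.card_image_le ih
      _ = 𝒢.card ^ (k+1) := by rw [Finset.sum_const, smul_eq_mul, pow_succ, mul_comm]

lemma prod_mem_wordsExact (𝒢 : Finset (UG d)) :
    ∀ l : List (UG d), (∀ g ∈ l, g ∈ 𝒢) → l.prod ∈ wordsExact 𝒢 l.length := by
  classical
  intro l
  induction l with
  | nil => intro _; simp [wordsExact]
  | cons a t ih =>
    intro h
    simp only [List.prod_cons, List.length_cons, wordsExact, Finset.mem_biUnion]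
    exact ⟨a, h a List.mem_cons_self, Finset.mem_image.2
      ⟨t.prod, ih (fun g hg => h g (List.mem_cons_of_mem a hg)), rfl⟩⟩

lemma wordsLe_subset_wordFinset (𝒢 : Finset (UG d)) (r : ℕ) :
    wordsLe 𝒢 r ⊆ ↑(wordFinset 𝒢 r) := by
  rintro W ⟨l, hlen, hmem, rfl⟩
  simp only [wordFinset, Finset.coe_biUnion, Set.mem_iUnion, Finset.mem_coe]
  exact ⟨l.length, Finset.mem_range.2 (Nat.lt_succ_of_le hlen), prod_mem_wordsExact 𝒢 l hmem⟩

lemma geom_sum_le_pow {g : ℕ} (hg : 2 ≤ g) (n : ℕ) :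
    ∑ k ∈ Finset.range n, g ^ k ≤ g ^ n := by
  induction n with
  | zero => simp
  | succ n ih =>
    rw [Finset.sum_range_succ, pow_succ]
    have : g ^ n * 2 ≤ g ^ n * g := Nat.mul_le_mul_left _ hg
    omega

lemma card_wordFinset (𝒢 : Finset (UG d)) (h𝒢 : 2 ≤ 𝒢.card) (r : ℕ) :
    (wordFinset 𝒢 r).card ≤ 𝒢.card ^ (r+1) := by
  classical
  calc (wordFinset 𝒢 r).card ≤ ∑ k ∈ Finset.range (r+1), (wordsExact 𝒢 k).card :=
        Finset.card_biUnion_le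
    _ ≤ ∑ k ∈ Finset.range (r+1), 𝒢.card ^ k :=
        Finset.sum_le_sum fun k _ => card_wordsExact 𝒢 k
    _ ≤ 𝒢.card ^ (r+1) := geom_sum_le_pow h𝒢 _

-- disjoint balls counting
lemma packing_count (μ : Measure (UG d)) [μ.IsMulLeftInvariant] {ε : ℝ} (hε : 0 < ε)
    (T : Finset (UG d)) (hsep : (↑T : Set (UG d)).Pairwise fun x y => ε ≤ D x y)
    (Z : Set (UG d)) (hTZ : ∀ x ∈ T, ball x (ε/3) ⊆ Z) :
    (T.card : ℝ≥0∞) * Vol μ (ε/3) ≤ μ Z := by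
  have hdisj : (↑T : Set (UG d)).PairwiseDisjoint (fun x => ball x (ε/3)) := by
    intro x hx y hy hxy
    rw [Function.onFun, Set.disjoint_left]
    intro u hux huy
    have h1 : D u x ≤ ε/3 := hux
    have h2 : D u y ≤ ε/3 := huy
    have h3 : ε ≤ D x y := hsep hx hy hxy
    have h4 : D x y ≤ D x u + D u y := D_triangle x u y
    rw [D_symm x u] at h4
    linarith
  have heq := measure_biUnion_finset (μ := μ) hdisj (fun b _ => measurableSet_ball b (ε/3))
  calc (T.card : ℝ≥0∞) * Vol μ (ε/3)
      = ∑ x ∈ T, μ (ball x (ε/3)) := by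
        rw [Finset.sum_congr rfl (fun x _ => vol_ball μ x (ε/3)), Finset.sum_const,
          nsmul_eq_mul]
    _ = μ (⋃ x ∈ T, ball x (ε/3)) := heq.symm
    _ ≤ μ Z := by
        apply measure_mono
        intro u hu
        simp only [Set.mem_iUnion] at hu
        obtain ⟨x, hx, hux⟩ := hu
        exact hTZ x hx hux

lemma le_Npack {X : Type*} (dist : X → X → ℝ) (Y : Set X) (ε : ℝ) (S : Finset X)
    (h : ↑S ⊆ Y ∧ (S : Set X).Pairwise fun x y => ε ≤ dist x y) :
    (S.card : ℝ≥0∞) ≤ Npack dist Y ε :=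
  le_iSup₂ (f := fun (S : Finset X) (_ : ↑S ⊆ Y ∧ (S : Set X).Pairwise fun x y => ε ≤ dist x y)
    => (S.card : ℝ≥0∞)) S h

end


theorem stmt14 {d : ℕ} (hd : 2 ≤ d) (μ ν : Measure (UG d))
    [IsProbabilityMeasure μ] [μ.IsMulLeftInvariant] [IsProbabilityMeasure ν]
    (c_o cO : ℝ) (hco : 0 < c_o) (hco1 : c_o ≤ 1) (hcO : 1 ≤ cO)
    (hvol : ∀ r : ℝ, 0 < r → r ≤ 2 →
      ENNReal.ofReal ((c_o * r) ^ (d ^ 2 - 1)) ≤ Vol μ r ∧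
        Vol μ r ≤ ENNReal.ofReal ((cO * r) ^ (d ^ 2 - 1)))
    (𝒢 : Finset (UG d)) (h𝒢 : 2 ≤ 𝒢.card)
    {α β ε : ℝ} (hα0 : 0 < α) (hα1 : α ≤ 1) (hβ : 1 ≤ β) (hε : 0 < ε)
    (hβε : 2 * β * ε ≤ 2)
    (hequi : Equidistributed μ ν α β ε)
    (r : ℕ)
    (hr : (r : ℝ) + 2 <
      ((d ^ 2 - 1 : ℕ) : ℝ) * Real.log ((c_o / (4 * β * cO ^ 2)) / ε) / Real.log (𝒢.card)) :
    (Vol μ (2 * β * ε))⁻¹ ≤ Npack D (msupport ν) ε ∧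
      Npack D (msupport ν) ε ≤
        2 * Npack D {U : UG d | U ∈ msupport ν ∧ ∀ W ∈ wordsLe 𝒢 r, ¬ D U W ≤ ε} ε := by
  classical
  have hεle1 : ε ≤ 1 := by nlinarith
  have hg2 : (2:ℝ) ≤ (𝒢.card : ℝ) := by exact_mod_cast h𝒢
  have hgpos : (0:ℝ) < (𝒢.card : ℝ) := by linarith
  have hlogg : 0 < Real.log (𝒢.card : ℝ) := Real.log_pos (by linarith)
  set Dn : ℕ := d ^ 2 - 1 with hDndef
  set A : ℝ := c_o / (4 * β * cO ^ 2) with hAdef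
  have hA0 : 0 < A := by
    apply div_pos hco
    positivity
  have hAε : 1 < A / ε := by
    by_contra hcon
    push_neg at hcon
    have hlogAε : Real.log (A / ε) ≤ 0 := Real.log_nonpos (by positivity) hcon
    have hle : ((d ^ 2 - 1 : ℕ) : ℝ) * Real.log (A / ε) / Real.log (𝒢.card : ℝ) ≤ 0 := by
      apply div_nonpos_of_nonpos_of_nonneg
      · exact mul_nonpos_of_nonneg_of_nonpos (by positivity) hlogAε
      · exact hlogg.le
    have hpos : (0:ℝ) < (r : ℝ) + 2 := by positivity
    rw [hAdef] at hle
    linarith [hr]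
  have hεA : ε < A := by
    have := (one_lt_div hε).1 hAε
    linarith
  have hgr : ((𝒢.card : ℝ)) ^ (r + 2) < (A / ε) ^ Dn := by
    have h1 : ((r : ℝ) + 2) * Real.log (𝒢.card : ℝ) < (Dn : ℝ) * Real.log (A / ε) := by
      have h := (lt_div_iff₀ hlogg).1 hr
      rw [hAdef, hDndef]
      exact h
    have hAεpos : (0:ℝ) < A / ε := by positivity
    have l1 : Real.log (((𝒢.card : ℝ)) ^ (r + 2)) = ((r : ℝ) + 2) * Real.log (𝒢.card : ℝ) := by
      rw [Real.log_pow]; push_cast; ring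
    have l2 : Real.log ((A / ε) ^ Dn) = (Dn : ℝ) * Real.log (A / ε) := by
      rw [Real.log_pow]
    have hlt : Real.log (((𝒢.card : ℝ)) ^ (r + 2)) < Real.log ((A / ε) ^ Dn) := by
      rw [l1, l2]; exact h1
    have hpow1 : (0:ℝ) < ((𝒢.card : ℝ)) ^ (r + 2) := by positivity
    exact (Real.log_lt_log_iff hpow1 (by positivity)).1 hlt
  -- the set of packing cardinalities of the support
  set P : Set ℕ := {n | ∃ S : Finset (UG d), ↑S ⊆ msupport ν ∧
    ((S : Set (UG d)).Pairwise fun x y => ε ≤ D x y) ∧ S.card = n} with hPdef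
  have h0P : 0 ∈ P := ⟨∅, by simp, by simp, rfl⟩
  have hvol3 := hvol (ε/3) (by linarith) (by linarith)
  have hvolpos : (0:ℝ) < (c_o * (ε/3)) ^ Dn := by positivity
  have hcount : ∀ n ∈ P, (n : ℝ) * (c_o * (ε/3)) ^ Dn ≤ 1 := by
    rintro n ⟨S, hS1, hS2, rfl⟩
    have h1 := packing_count μ hε S hS2 Set.univ (fun x _ => Set.subset_univ _)
    have h2 : (S.card : ℝ≥0∞) * Vol μ (ε/3) ≤ 1 := by
      rw [← measure_univ (μ := μ)]; exact h1
    have h3 : (S.card : ℝ≥0∞) * ENNReal.ofReal ((c_o * (ε/3)) ^ Dn) ≤ 1 :=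
      le_trans (mul_le_mul_right hvol3.1 _) h2
    rw [← ENNReal.ofReal_natCast S.card, ← ENNReal.ofReal_mul (by positivity),
      ← ENNReal.ofReal_one] at h3
    exact (ENNReal.ofReal_le_ofReal_iff (by norm_num)).1 h3
  have hbddP : BddAbove P := by
    refine ⟨Nat.ceil ((1:ℝ)/((c_o * (ε/3)) ^ Dn)), fun n hn => ?_⟩
    have h2 : (n : ℝ) ≤ 1/((c_o * (ε/3)) ^ Dn) := (le_div_iff₀ hvolpos).2 (hcount n hn)
    exact Nat.cast_le.1 (le_trans h2 (Nat.le_ceil _))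
  set N : ℕ := sSup P with hNdef
  obtain ⟨S, hSsub, hSsep, hScard⟩ : N ∈ P := Nat.sSup_mem ⟨0, h0P⟩ hbddP
  have hNpack_le : Npack D (msupport ν) ε ≤ (N : ℝ≥0∞) := by
    refine iSup₂_le fun T hT => ?_
    have hTP : T.card ∈ P := ⟨T, hT.1, hT.2, rfl⟩
    exact Nat.cast_le.2 (le_csSup hbddP hTP)
  have hNpack_ge : (N : ℝ≥0∞) ≤ Npack D (msupport ν) ε := by
    rw [← hScard]
    exact le_Npack D (msupport ν) ε S ⟨hSsub, hSsep⟩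
  -- maximality gives a covering
  have hcover : msupport ν ⊆ ⋃ x ∈ S, ball x ε := by
    intro y hy
    by_contra hy'
    simp only [Set.mem_iUnion, not_exists] at hy'
    have hfar : ∀ x ∈ S, ¬ D y x ≤ ε := by
      intro x hx h
      exact hy' x hx h
    have hyS : y ∉ S := by
      intro hyS
      exact hfar y hyS (by rw [D_self]; exact hε.le)
    have hmem : (N+1) ∈ P := by
      refine ⟨insert y S, ?_, ?_, ?_⟩
      · rw [Finset.coe_insert]
        exact Set.insert_subset hy hSsub
      · rw [Finset.coe_insert]
        refine Set.pairwise_insert.2 ⟨hSsep, fun x hx hxy => ?_⟩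
        have h1 : ε < D y x := not_le.1 (hfar x hx)
        exact ⟨h1.le, (D_symm y x) ▸ h1.le⟩
      · rw [Finset.card_insert_of_notMem hyS, hScard]
    have := le_csSup hbddP hmem
    omega
  have hβεpos : 0 < β * ε := by positivity
  have hVβ_le : Vol μ (β*ε) ≤ ENNReal.ofReal ((cO * (β*ε)) ^ Dn) :=
    (hvol (β*ε) hβεpos (by nlinarith)).2
  have hone : (1:ℝ≥0∞) ≤ (N : ℝ≥0∞) * Vol μ (β * ε) := by
    calc (1:ℝ≥0∞) ≤ ν (msupport ν) := one_le_measure_msupport ν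
      _ ≤ ν (⋃ x ∈ S, ball x ε) := measure_mono hcover
      _ ≤ ∑ x ∈ S, ν (ball x ε) := measure_biUnion_finset_le S _
      _ ≤ ∑ x ∈ S, Vol μ (β * ε) := Finset.sum_le_sum fun x _ => (hequi x ε le_rfl).2
      _ = (S.card : ℝ≥0∞) * Vol μ (β * ε) := by rw [Finset.sum_const, nsmul_eq_mul]
      _ = (N : ℝ≥0∞) * Vol μ (β * ε) := by rw [hScard]
  have h2βεpos : 0 < 2 * β * ε := by positivity
  have hV2_lb := (hvol (2*β*ε) h2βεpos hβε).1
  have hV2pos : Vol μ (2*β*ε) ≠ 0 := by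
    intro h
    rw [h, nonpos_iff_eq_zero, ENNReal.ofReal_eq_zero] at hV2_lb
    have hgt : (0:ℝ) < (c_o * (2*β*ε)) ^ Dn := by positivity
    linarith
  have hV2top : Vol μ (2*β*ε) ≠ ⊤ := (lt_of_le_of_lt prob_le_one ENNReal.one_lt_top).ne
  have hmono2 : Vol μ (β*ε) ≤ Vol μ (2*β*ε) := by
    apply measure_mono
    intro u hu
    have : D u 1 ≤ β * ε := hu
    show D u 1 ≤ 2 * β * ε
    nlinarith
  have part1 : (Vol μ (2*β*ε))⁻¹ ≤ (N : ℝ≥0∞) := by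
    have h1 : (1:ℝ≥0∞) ≤ (N : ℝ≥0∞) * Vol μ (2*β*ε) :=
      le_trans hone (mul_le_mul_right hmono2 _)
    calc (Vol μ (2*β*ε))⁻¹ = (Vol μ (2*β*ε))⁻¹ * 1 := (mul_one _).symm
      _ ≤ (Vol μ (2*β*ε))⁻¹ * ((N : ℝ≥0∞) * Vol μ (2*β*ε)) := mul_le_mul_right h1 _
      _ = (N : ℝ≥0∞) * ((Vol μ (2*β*ε))⁻¹ * Vol μ (2*β*ε)) := by ring
      _ = (N : ℝ≥0∞) := by rw [ENNReal.inv_mul_cancel hV2pos hV2top, mul_one]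
  -- bad points of the packing
  set f : UG d → UG d := fun x =>
    if h : ∃ W, W ∈ wordsLe 𝒢 r ∧ D x W ≤ ε then h.choose else 1 with hfdef
  have hf : ∀ x : UG d, (∃ W, W ∈ wordsLe 𝒢 r ∧ D x W ≤ ε) →
      f x ∈ wordFinset 𝒢 r ∧ D x (f x) ≤ ε := by
    intro x h
    have hsp := h.choose_spec
    rw [hfdef]
    simp only [dif_pos h]
    exact ⟨wordsLe_subset_wordFinset 𝒢 r hsp.1, hsp.2⟩
  set B : Finset (UG d) := S.filter (fun x => ∃ W, W ∈ wordsLe 𝒢 r ∧ D x W ≤ ε) with hBdef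
  set Gd : Finset (UG d) := S \ B with hGdef
  have hvol43 := hvol (4*ε/3) (by linarith) (by linarith)
  have hfiber : ∀ W ∈ wordFinset 𝒢 r,
      ((B.filter (fun x => f x = W)).card : ℝ) ≤ (4*cO/c_o) ^ Dn := by
    intro W hW
    set T : Finset (UG d) := B.filter (fun x => f x = W) with hTdef
    have hTS : T ⊆ S := (Finset.filter_subset _ _).trans (Finset.filter_subset _ _)
    have hsepT : (↑T : Set (UG d)).Pairwise fun x y => ε ≤ D x y :=
      hSsep.mono (Finset.coe_subset.2 hTS)
    have hTZ : ∀ x ∈ T, ball x (ε/3) ⊆ ball W (4*ε/3) := by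
      intro x hx u hu
      have hxB : x ∈ B := (Finset.mem_filter.1 hx).1
      have hfx : f x = W := (Finset.mem_filter.1 hx).2
      have hxW : D x W ≤ ε := by
        have hh := (hf x (Finset.mem_filter.1 hxB).2).2
        rwa [hfx] at hh
      have h1 : D u x ≤ ε/3 := hu
      have h2 := D_triangle u x W
      show D u W ≤ 4*ε/3
      linarith
    have h1 := packing_count μ hε T hsepT (ball W (4*ε/3)) hTZ
    rw [vol_ball μ W (4*ε/3)] at h1
    have h2 : (T.card : ℝ≥0∞) * ENNReal.ofReal ((c_o*(ε/3)) ^ Dn) ≤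
        ENNReal.ofReal ((cO*(4*ε/3)) ^ Dn) :=
      le_trans (mul_le_mul_right hvol3.1 _) (le_trans h1 hvol43.2)
    rw [← ENNReal.ofReal_natCast T.card, ← ENNReal.ofReal_mul (by positivity)] at h2
    have h3 : (T.card : ℝ) * (c_o*(ε/3)) ^ Dn ≤ (cO*(4*ε/3)) ^ Dn :=
      (ENNReal.ofReal_le_ofReal_iff (by positivity)).1 h2
    have h4 : (T.card : ℝ) ≤ (cO*(4*ε/3)) ^ Dn / (c_o*(ε/3)) ^ Dn :=
      (le_div_iff₀ hvolpos).2 h3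
    have h5 : (cO*(4*ε/3)) ^ Dn / (c_o*(ε/3)) ^ Dn = (4*cO/c_o) ^ Dn := by
      rw [← div_pow]
      congr 1
      field_simp
    rwa [h5] at h4
  have hBbound : (B.card : ℝ) ≤ ((𝒢.card : ℝ)) ^ (r+1) * (4*cO/c_o) ^ Dn := by
    have hmaps : ∀ x ∈ B, f x ∈ wordFinset 𝒢 r := fun x hx =>
      (hf x (Finset.mem_filter.1 hx).2).1
    have hcardeq := Finset.card_eq_sum_card_fiberwise hmaps
    have hcast : (B.card : ℝ) =
        ∑ W ∈ wordFinset 𝒢 r, ((B.filter (fun x => f x = W)).card : ℝ) := by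
      rw [hcardeq]; push_cast; ring
    rw [hcast]
    calc ∑ W ∈ wordFinset 𝒢 r, ((B.filter (fun x => f x = W)).card : ℝ)
        ≤ ∑ _W ∈ wordFinset 𝒢 r, (4*cO/c_o) ^ Dn := Finset.sum_le_sum hfiber
      _ = ((wordFinset 𝒢 r).card : ℝ) * (4*cO/c_o) ^ Dn := by
          rw [Finset.sum_const, nsmul_eq_mul]
      _ ≤ ((𝒢.card : ℝ)) ^ (r+1) * (4*cO/c_o) ^ Dn := by
          apply mul_le_mul_of_nonneg_right _ (by positivity)
          exact_mod_cast Nat.cast_le.2 (card_wordFinset 𝒢 h𝒢 r)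
  have hNreal : (1:ℝ) ≤ (N : ℝ) * (cO * (β*ε)) ^ Dn := by
    have h1 : (1:ℝ≥0∞) ≤ (N : ℝ≥0∞) * ENNReal.ofReal ((cO * (β*ε)) ^ Dn) :=
      le_trans hone (mul_le_mul_right hVβ_le _)
    rw [← ENNReal.ofReal_natCast N, ← ENNReal.ofReal_mul (by positivity)] at h1
    exact ENNReal.one_le_ofReal.1 h1
  have h2B : 2 * B.card ≤ N := by
    have hm0 : (0:ℝ) < (4*cO/c_o) ^ Dn := by positivity
    have e2 : (2:ℝ) * ((𝒢.card : ℝ)) ^ (r+1) ≤ ((𝒢.card : ℝ)) ^ (r+2) := by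
      have : ((𝒢.card : ℝ)) ^ (r+2) = ((𝒢.card : ℝ)) ^ (r+1) * (𝒢.card : ℝ) := by
        rw [pow_succ]
      nlinarith [pow_pos hgpos (r+1)]
    have e3 : ((𝒢.card : ℝ)) ^ (r+2) * (4*cO/c_o) ^ Dn < (A/ε) ^ Dn * (4*cO/c_o) ^ Dn :=
      mul_lt_mul_of_pos_right hgr hm0
    have e4 : (A/ε) ^ Dn * (4*cO/c_o) ^ Dn = (1/(cO * (β*ε))) ^ Dn := by
      rw [← mul_pow]
      congr 1
      rw [hAdef]
      field_simp
    have hp : (0:ℝ) < (cO * (β*ε)) ^ Dn := by positivity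
    have e5 : (1/(cO * (β*ε))) ^ Dn ≤ (N:ℝ) := by
      rw [one_div_pow]
      rw [div_le_iff₀ hp]
      linarith
    have echain : (2:ℝ) * B.card < (N:ℝ) := by
      calc (2:ℝ) * B.card ≤ 2 * (((𝒢.card : ℝ)) ^ (r+1) * (4*cO/c_o) ^ Dn) := by nlinarith
        _ = (2 * ((𝒢.card : ℝ)) ^ (r+1)) * (4*cO/c_o) ^ Dn := by ring
        _ ≤ ((𝒢.card : ℝ)) ^ (r+2) * (4*cO/c_o) ^ Dn :=
            mul_le_mul_of_nonneg_right e2 hm0.le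
        _ < (A/ε) ^ Dn * (4*cO/c_o) ^ Dn := e3
        _ = (1/(cO * (β*ε))) ^ Dn := e4
        _ ≤ (N:ℝ) := e5
    have : ((2 * B.card : ℕ) : ℝ) < (N : ℝ) := by push_cast; linarith
    exact (Nat.cast_lt.1 this).le
  have hBS : B ⊆ S := Finset.filter_subset _ _
  have hGcard : Gd.card = N - B.card := by
    rw [hGdef, Finset.card_sdiff_of_subset hBS, hScard]
  have hBN : B.card ≤ N := hScard ▸ Finset.card_le_card hBS
  have hGN : N ≤ 2 * Gd.card := by omega
  have hGsub : ↑Gd ⊆ {U : UG d | U ∈ msupport ν ∧ ∀ W ∈ wordsLe 𝒢 r, ¬ D U W ≤ ε} := by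
    intro x hx
    rw [Finset.mem_coe, hGdef, Finset.mem_sdiff] at hx
    obtain ⟨hxS, hxB⟩ := hx
    refine ⟨hSsub hxS, fun W hW hDW => ?_⟩
    exact hxB (Finset.mem_filter.2 ⟨hxS, ⟨W, hW, hDW⟩⟩)
  have hGsep : (↑Gd : Set (UG d)).Pairwise fun x y => ε ≤ D x y := by
    apply hSsep.mono
    rw [hGdef]
    exact Finset.coe_subset.2 (Finset.sdiff_subset)
  refine ⟨le_trans part1 hNpack_ge, ?_⟩
  calc Npack D (msupport ν) ε ≤ (N : ℝ≥0∞) := hNpack_le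
    _ ≤ ((2 * Gd.card : ℕ) : ℝ≥0∞) := Nat.cast_le.2 hGN
    _ = 2 * (Gd.card : ℝ≥0∞) := by push_cast; ring
    _ ≤ 2 * Npack D {U : UG d | U ∈ msupport ν ∧ ∀ W ∈ wordsLe 𝒢 r, ¬ D U W ≤ ε} ε :=
        mul_le_mul_right (le_Npack _ _ _ Gd ⟨hGsub, hGsep⟩) 2


end Paper
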